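/- For every positive integer k, cφ_k(2) = 2k² + (k choose 2)², which equals k²(k²-2k+9)/4. -/

import Mathlib

open Finset PowerSeries

/-- The quadratic form `Q(m₁,…,m_r) = ∑ mᵢ² + ∑_{i<j} mᵢ mⱼ`. -/
def frobQ {r : ℕ} (v : Fin r → ℤ) : ℤ :=
  (∑ i, v i ^ 2) + ∑ i, ∑ j ∈ Finset.Ioi i, v i * v j

/-- The `n`-th coefficient of the theta series `∑_{m₁,…,m_{k-1} ∈ ℤ} q^{Q(m₁,…,m_{k-1})}`,
i.e. the number of integer vectors of length `k-1` on which `Q` takes the value `n`. -/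
noncomputable def frobThetaCoeff (k n : ℕ) : ℕ :=
  Nat.card {v : Fin (k - 1) → ℤ // frobQ v = (n : ℤ)}

/-- `c : ℕ → ℤ` is the coefficient sequence of the `k`-colored generalized Frobenius
partition generating function, i.e. `∑ c(n) qⁿ = (∑_{m ∈ ℤ^{k-1}} q^{Q(m)}) / ∏_{n≥1}(1-qⁿ)^k`
as formal power series: multiplying by a sufficiently long truncation of `∏ (1-qⁿ)^k`
recovers each theta coefficient. -/
def IsCphi (k : ℕ) (c : ℕ → ℤ) : Prop :=
  ∀ n : ℕ,
    (PowerSeries.coeff n)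
        ((PowerSeries.mk fun m => c m) *
          ∏ i ∈ Finset.range (n + 1), (1 - (PowerSeries.X : PowerSeries ℤ) ^ (i + 1)) ^ k) =
      frobThetaCoeff k n

lemma two_frobQ {r : ℕ} (v : Fin r → ℤ) :
    2 * frobQ v = (∑ i, v i ^ 2) + (∑ i, v i) ^ 2 := by
  have h := Finset.sum_sum_Ioi_add_eq_sum_sum_off_diag (fun i j => v i * v j)
  have hsym : ∑ i : Fin r, ∑ j ∈ Ioi i, (v j * v i + v i * v j)
      = 2 * ∑ i : Fin r, ∑ j ∈ Ioi i, v i * v j := by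
    rw [Finset.mul_sum]
    exact Finset.sum_congr rfl fun i _ => by
      rw [Finset.mul_sum]; exact Finset.sum_congr rfl fun j _ => by ring
  have h2 : ∑ i : Fin r, ∑ j ∈ ({i}ᶜ : Finset (Fin r)), v j * v i
      = (∑ i, v i) ^ 2 - ∑ i, v i ^ 2 := by
    have key : ∀ i : Fin r, ∑ j ∈ ({i}ᶜ : Finset (Fin r)), v j * v i
        = (∑ j, v j) * v i - v i * v i := by
      intro i
      have h3 := Finset.sum_add_sum_compl ({i} : Finset (Fin r)) (fun j => v j * v i)
      have h4 : (∑ j, v j) * v i = ∑ j : Fin r, v j * v i := Finset.sum_mul ..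
      simp at h3
      linarith
    rw [Finset.sum_congr rfl (fun i _ => key i), Finset.sum_sub_distrib,
      ← Finset.mul_sum]
    ring
  simp only [hsym] at h
  have h' : 2 * ∑ i : Fin r, ∑ j ∈ Ioi i, v i * v j
      = (∑ i, v i) ^ 2 - ∑ i, v i ^ 2 := by
    rw [h]; convert h2 using 4 <;> congr!
  unfold frobQ
  linarith

lemma theta_equiv (r : ℕ) (n : ℤ) :
    Nat.card {v : Fin r → ℤ // frobQ v = n} =
    Nat.card {x : Fin (r + 1) → ℤ // (∑ i, x i) = 0 ∧ (∑ i, x i ^ 2) = 2 * n} := by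
  apply Nat.card_congr
  refine ⟨fun v => ⟨Fin.snoc v.1 (-∑ i, v.1 i), ?_, ?_⟩,
    fun x => ⟨Fin.init x.1, ?_⟩, fun v => ?_, fun x => ?_⟩
  · rw [Fin.sum_univ_castSucc]
    simp [Fin.snoc_castSucc, Fin.snoc_last]
  · rw [Fin.sum_univ_castSucc]
    simp only [Fin.snoc_castSucc, Fin.snoc_last]
    have := two_frobQ v.1
    have hv := v.2
    nlinarith [this, hv]
  · obtain ⟨hs, hq⟩ := x.2
    rw [Fin.sum_univ_castSucc] at hs hq
    have hlast : x.1 (Fin.last r) = -∑ i : Fin r, Fin.init x.1 i := by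
      simp only [Fin.init] at *; linarith
    have : 2 * frobQ (Fin.init x.1) = 2 * n := by
      rw [two_frobQ]
      simp only [Fin.init] at *
      rw [hlast] at hq
      nlinarith [hq]
    linarith
  · ext i
    simp [Fin.init_snoc]
  · ext i
    simp only
    have hlast : x.1 (Fin.last r) = -∑ i : Fin r, Fin.init x.1 i := by
      have hs := x.2.1
      rw [Fin.sum_univ_castSucc] at hs
      simp only [Fin.init] at *; linarith
    rw [← hlast, Fin.snoc_init_self]

lemma pairCount (m a b : ℕ) :
    Nat.card {p : Finset (Fin m) × Finset (Fin m) //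
      p.1.card = a ∧ p.2.card = b ∧ Disjoint p.1 p.2} =
    m.choose a * (m - a).choose b := by
  rw [Nat.card_eq_fintype_card, Fintype.card_subtype]
  have hset : (Finset.univ.filter fun p : Finset (Fin m) × Finset (Fin m) =>
        p.1.card = a ∧ p.2.card = b ∧ Disjoint p.1 p.2) =
      ((Finset.univ.powersetCard a).sigma fun A => (Aᶜ.powersetCard b)).map
        ⟨fun s => (s.1, s.2), fun s t h => by
          cases s; cases t; simp at h; simp [Sigma.ext_iff]; exact h⟩ := by
    ext ⟨A, B⟩
    simp only [Finset.mem_filter, Finset.mem_univ, true_and, Finset.mem_map,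
      Finset.mem_sigma, Finset.mem_powersetCard, Function.Embedding.coeFn_mk]
    constructor
    · rintro ⟨hA, hB, hd⟩
      exact ⟨⟨A, B⟩, ⟨⟨Finset.subset_univ _, hA⟩,
        ⟨le_compl_iff_disjoint_left.mpr hd, hB⟩⟩, rfl⟩
    · rintro ⟨⟨A', B'⟩, ⟨⟨_, hA⟩, hB', hB⟩, h⟩
      cases h
      exact ⟨hA, hB, le_compl_iff_disjoint_left.mp hB'⟩
  rw [hset, Finset.card_map, Finset.card_sigma]
  have hcard : ∀ A ∈ (Finset.univ : Finset (Fin m)).powersetCard a, (Aᶜ.powersetCard b).card = (m - a).choose b := by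
    intro (A : Finset (Fin m)) hA
    rw [Finset.card_powersetCard, Finset.card_compl,
      (Finset.mem_powersetCard.mp hA).2, Fintype.card_fin]
  rw [Finset.sum_congr rfl hcard, Finset.sum_const, Finset.card_powersetCard,
    Finset.card_univ, Fintype.card_fin, smul_eq_mul]

lemma int_tri {a : ℤ} (h : a ^ 2 ≤ 3) : a = -1 ∨ a = 0 ∨ a = 1 := by
  have h1 : 4 * a ≥ -7 := by nlinarith [sq_nonneg (a + 2)]
  have h2 : 4 * a ≤ 7 := by nlinarith [sq_nonneg (a - 2)]
  omega

lemma tri_of {m : ℕ} (x : Fin m → ℤ) (h0 : (∑ i, x i) = 0) (hle : (∑ i, x i ^ 2) ≤ 4) :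
    ∀ i, x i = -1 ∨ x i = 0 ∨ x i = 1 := by
  intro i
  have hpos : ∀ j : Fin m, (0:ℤ) ≤ x j ^ 2 := fun j => sq_nonneg _
  have hsingle : x i ^ 2 ≤ ∑ j, x j ^ 2 :=
    Finset.single_le_sum (fun j _ => hpos j) (Finset.mem_univ i)
  have h4 : x i ^ 2 ≤ 4 := le_trans hsingle hle
  apply int_tri
  by_contra hgt
  push_neg at hgt
  have hge : 4 ≤ x i ^ 2 := by nlinarith
  have heq : x i ^ 2 = 4 := le_antisymm h4 hge
  -- all other entries are zero
  have hsplit : x i ^ 2 + ∑ j ∈ Finset.univ.erase i, x j ^ 2 = ∑ j, x j ^ 2 :=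
    Finset.add_sum_erase Finset.univ (fun j => x j ^ 2) (Finset.mem_univ i)
  have hrest : ∑ j ∈ Finset.univ.erase i, x j ^ 2 = 0 := by
    have : ∑ j ∈ Finset.univ.erase i, x j ^ 2 ≤ 0 := by
      have := le_trans (le_of_eq hsplit) hle
      linarith [heq]
    have h0' : 0 ≤ ∑ j ∈ Finset.univ.erase i, x j ^ 2 :=
      Finset.sum_nonneg fun j _ => hpos j
    linarith
  have hzero : ∀ j ∈ Finset.univ.erase i, x j = 0 := by
    intro j hj
    have := (Finset.sum_eq_zero_iff_of_nonneg fun j _ => hpos j).mp hrest j hj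
    exact pow_eq_zero_iff (by norm_num) |>.mp this
  have hsum : (∑ j, x j) = x i := by
    rw [← Finset.add_sum_erase Finset.univ x (Finset.mem_univ i),
      Finset.sum_eq_zero hzero, add_zero]
  rw [h0] at hsum
  nlinarith [heq, hsum]

lemma countX (m n : ℕ) (hn : 2 * n ≤ 4) :
    Nat.card {x : Fin m → ℤ // (∑ i, x i) = 0 ∧ (∑ i, x i ^ 2) = 2 * (n:ℤ)} =
    Nat.card {p : Finset (Fin m) × Finset (Fin m) //
      p.1.card = n ∧ p.2.card = n ∧ Disjoint p.1 p.2} := by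
  apply Nat.card_congr
  have key : ∀ (x : Fin m → ℤ), (∑ i, x i) = 0 → (∑ i, x i ^ 2) = 2 * (n:ℤ) →
      ((Finset.univ.filter fun i => x i = 1).card = n ∧
       (Finset.univ.filter fun i => x i = -1).card = n) := by
    intro x h0 hs
    have tri := tri_of x h0 (by rw [hs]; exact_mod_cast by exact_mod_cast (by push_cast; omega : (2*(n:ℤ)) ≤ 4))
    have hx1 : ∀ i, x i = (if x i = 1 then (1:ℤ) else 0) - (if x i = -1 then 1 else 0) := by
      intro i; rcases tri i with h | h | h <;> simp [h]
    have hx2 : ∀ i, x i ^ 2 = (if x i = 1 then (1:ℤ) else 0) + (if x i = -1 then 1 else 0) := by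
      intro i; rcases tri i with h | h | h <;> simp [h]
    have e1 : (0:ℤ) = ((Finset.univ.filter fun i => x i = 1).card : ℤ)
        - (Finset.univ.filter fun i => x i = -1).card := by
      rw [← h0, Finset.sum_congr rfl fun i _ => hx1 i, Finset.sum_sub_distrib]
      simp [Finset.sum_boole]
    have e2 : (2 * (n:ℤ)) = ((Finset.univ.filter fun i => x i = 1).card : ℤ)
        + (Finset.univ.filter fun i => x i = -1).card := by
      rw [← hs, Finset.sum_congr rfl fun i _ => hx2 i, Finset.sum_add_distrib]
      simp [Finset.sum_boole]
    constructor <;> omega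
  refine ⟨fun x => ⟨(Finset.univ.filter fun i => x.1 i = 1,
                     Finset.univ.filter fun i => x.1 i = -1), ?_, ?_, ?_⟩,
    fun p => ⟨fun i => if i ∈ p.1.1 then 1 else if i ∈ p.1.2 then -1 else 0, ?_, ?_⟩,
    fun x => ?_, fun p => ?_⟩
  · exact (key x.1 x.2.1 x.2.2).1
  · exact (key x.1 x.2.1 x.2.2).2
  · rw [Finset.disjoint_left]
    intro i hi hj
    simp at hi hj
    omega
  · -- sum is zero
    obtain ⟨⟨A, B⟩, hA, hB, hd⟩ := p
    simp only
    have : ∀ i, (if i ∈ A then (1:ℤ) else if i ∈ B then -1 else 0)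
        = (if i ∈ A then (1:ℤ) else 0) - (if i ∈ B then 1 else 0) := by
      intro i
      by_cases h1 : i ∈ A <;> by_cases h2 : i ∈ B <;>
        simp [h1, h2] <;> exact absurd (Finset.disjoint_left.mp hd h1 h2) (by simp)
    rw [Finset.sum_congr rfl fun i _ => this i, Finset.sum_sub_distrib]
    simp [Finset.sum_boole, Finset.filter_mem_eq_inter, hA, hB]
  · -- sum of squares
    obtain ⟨⟨A, B⟩, hA, hB, hd⟩ := p
    simp only
    have : ∀ i, (if i ∈ A then (1:ℤ) else if i ∈ B then -1 else 0) ^ 2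
        = (if i ∈ A then (1:ℤ) else 0) + (if i ∈ B then 1 else 0) := by
      intro i
      by_cases h1 : i ∈ A <;> by_cases h2 : i ∈ B <;>
        simp [h1, h2] <;> exact absurd (Finset.disjoint_left.mp hd h1 h2) (by simp)
    rw [Finset.sum_congr rfl fun i _ => this i, Finset.sum_add_distrib]
    simp [Finset.sum_boole, Finset.filter_mem_eq_inter, hA, hB]
    push_cast
    ring
  · -- left inverse
    obtain ⟨x, h0, hs⟩ := x
    have tri := tri_of x h0 (by rw [hs]; push_cast; omega)
    ext i
    simp only
    rcases tri i with h | h | h <;> simp [h]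
  · -- right inverse
    obtain ⟨⟨A, B⟩, hA, hB, hd⟩ := p
    simp only [Subtype.mk.injEq, Prod.mk.injEq]
    constructor <;> ext i <;> simp only [Finset.mem_filter, Finset.mem_univ, true_and]
    · constructor
      · intro h
        by_cases h1 : i ∈ A
        · exact h1
        · by_cases h2 : i ∈ B <;> simp [h1, h2] at h
      · intro h; simp [h]
    · constructor
      · intro h
        by_cases h1 : i ∈ A
        · simp [h1] at h
        · by_cases h2 : i ∈ B
          · exact h2
          · simp [h1, h2] at h
      · intro h
        have h1 : i ∉ A := fun hc => absurd (Finset.disjoint_left.mp hd hc h) (by simp)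
        simp [h1, h]

lemma coeff_one_sub_pow (m k n : ℕ) :
    PowerSeries.coeff n ((1 - (X : PowerSeries ℤ) ^ m) ^ k) =
    ∑ j ∈ Finset.range (k + 1), (if n = m * j then (-1) ^ j * (k.choose j : ℤ) else 0) := by
  have h : (1 - (X : PowerSeries ℤ) ^ m) ^ k = (-(X ^ m) + 1) ^ k := by ring
  rw [h, add_pow, map_sum]
  apply Finset.sum_congr rfl
  intro j hj
  have hterm : (-(X : PowerSeries ℤ) ^ m) ^ j * 1 ^ (k - j) * (k.choose j : PowerSeries ℤ)
      = PowerSeries.C ((-1) ^ j * (k.choose j : ℤ)) * X ^ (m * j) := by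
    rw [map_mul, map_pow, map_neg, map_one, map_natCast, pow_mul]
    ring
  rw [hterm, PowerSeries.coeff_C_mul, PowerSeries.coeff_X_pow, mul_ite, mul_one, mul_zero]

lemma coeff_zero_one_sub_pow (m k : ℕ) (hm : 0 < m) :
    PowerSeries.coeff 0 ((1 - (X : PowerSeries ℤ) ^ m) ^ k) = 1 := by
  rw [coeff_one_sub_pow]
  rw [Finset.sum_eq_single 0]
  · simp
  · intro j hj hne
    rw [if_neg]
    intro h
    rcases Nat.mul_eq_zero.mp h.symm with h' | h' <;> omega
  · simp

lemma coeff_one_one_sub_pow_one (k : ℕ) (hk : 0 < k) :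
    PowerSeries.coeff 1 ((1 - (X : PowerSeries ℤ) ^ 1) ^ k) = -(k:ℤ) := by
  rw [coeff_one_sub_pow]
  rw [Finset.sum_eq_single 1]
  · simp
  · intro j hj hne
    rw [if_neg]; omega
  · intro h; simp at h; omega
  
lemma coeff_two_one_sub_pow_one (k : ℕ) :
    PowerSeries.coeff 2 ((1 - (X : PowerSeries ℤ) ^ 1) ^ k) = (k.choose 2 : ℤ) := by
  rw [coeff_one_sub_pow]
  by_cases h2 : 2 ≤ k
  · rw [Finset.sum_eq_single 2]
    · simp
    · intro j hj hne; rw [if_neg]; omega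
    · intro h; simp at h; omega
  · have hk2 : k.choose 2 = 0 := Nat.choose_eq_zero_of_lt (by omega)
    rw [hk2, Finset.sum_eq_zero]
    · simp
    · intro j hj
      simp at hj
      rw [if_neg]; omega

lemma coeff_one_one_sub_pow_two (k : ℕ) :
    PowerSeries.coeff 1 ((1 - (X : PowerSeries ℤ) ^ 2) ^ k) = 0 := by
  rw [coeff_one_sub_pow, Finset.sum_eq_zero]
  intro j hj; rw [if_neg]; omega

lemma coeff_two_one_sub_pow_two (k : ℕ) (hk : 0 < k) :
    PowerSeries.coeff 2 ((1 - (X : PowerSeries ℤ) ^ 2) ^ k) = -(k:ℤ) := by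
  rw [coeff_one_sub_pow]
  rw [Finset.sum_eq_single 1]
  · simp
  · intro j hj hne; rw [if_neg]; omega
  · intro h; simp at h; omega

lemma coeff_one_one_sub_pow_three (k : ℕ) :
    PowerSeries.coeff 1 ((1 - (X : PowerSeries ℤ) ^ 3) ^ k) = 0 := by
  rw [coeff_one_sub_pow, Finset.sum_eq_zero]
  intro j hj; rw [if_neg]; omega

lemma coeff_two_one_sub_pow_three (k : ℕ) :
    PowerSeries.coeff 2 ((1 - (X : PowerSeries ℤ) ^ 3) ^ k) = 0 := by
  rw [coeff_one_sub_pow, Finset.sum_eq_zero]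
  intro j hj; rw [if_neg]; omega

lemma coeff_zero_mul' (φ ψ : PowerSeries ℤ) :
    PowerSeries.coeff 0 (φ * ψ) = PowerSeries.coeff 0 φ * PowerSeries.coeff 0 ψ := by
  rw [PowerSeries.coeff_mul, Finset.Nat.sum_antidiagonal_eq_sum_range_succ_mk]
  simp

lemma coeff_one_mul' (φ ψ : PowerSeries ℤ) :
    PowerSeries.coeff 1 (φ * ψ) = PowerSeries.coeff 0 φ * PowerSeries.coeff 1 ψ
      + PowerSeries.coeff 1 φ * PowerSeries.coeff 0 ψ := by
  rw [PowerSeries.coeff_mul, Finset.Nat.sum_antidiagonal_eq_sum_range_succ_mk]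
  rw [Finset.sum_range_succ, Finset.sum_range_one]

lemma coeff_two_mul' (φ ψ : PowerSeries ℤ) :
    PowerSeries.coeff 2 (φ * ψ) = PowerSeries.coeff 0 φ * PowerSeries.coeff 2 ψ
      + PowerSeries.coeff 1 φ * PowerSeries.coeff 1 ψ
      + PowerSeries.coeff 2 φ * PowerSeries.coeff 0 ψ := by
  rw [PowerSeries.coeff_mul, Finset.Nat.sum_antidiagonal_eq_sum_range_succ_mk]
  rw [Finset.sum_range_succ, Finset.sum_range_succ, Finset.sum_range_one]

lemma two_choose_two (n : ℕ) : 2 * (n.choose 2 : ℤ) = (n : ℤ) ^ 2 - n := by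
  induction n with
  | zero => simp
  | succ m ih =>
    rw [Nat.choose_succ_succ, Nat.choose_one_right]
    push_cast
    push_cast at ih
    ring_nf
    ring_nf at ih
    linarith


lemma thetaValue (k n : ℕ) (hk : 0 < k) (hn : 2 * n ≤ 4) :
    frobThetaCoeff k n = k.choose n * (k - n).choose n := by
  obtain ⟨r, rfl⟩ := Nat.exists_eq_succ_of_ne_zero hk.ne'
  show Nat.card {v : Fin r → ℤ // frobQ v = (n : ℤ)} = _
  rw [theta_equiv, countX _ n hn, pairCount]

lemma coeff_zero_mk_mul (c : ℕ → ℤ) (φ : PowerSeries ℤ) :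
    PowerSeries.coeff 0 ((PowerSeries.mk fun m => c m) * φ)
      = c 0 * PowerSeries.coeff 0 φ := by
  rw [coeff_zero_mul']; simp

lemma coeff_one_mk_mul (c : ℕ → ℤ) (φ : PowerSeries ℤ) :
    PowerSeries.coeff 1 ((PowerSeries.mk fun m => c m) * φ)
      = c 0 * PowerSeries.coeff 1 φ + c 1 * PowerSeries.coeff 0 φ := by
  rw [coeff_one_mul']; simp

lemma coeff_two_mk_mul (c : ℕ → ℤ) (φ : PowerSeries ℤ) :
    PowerSeries.coeff 2 ((PowerSeries.mk fun m => c m) * φ)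
      = c 0 * PowerSeries.coeff 2 φ + c 1 * PowerSeries.coeff 1 φ
        + c 2 * PowerSeries.coeff 0 φ := by
  rw [coeff_two_mul']; simp

/-- For every positive integer `k`, `cφ_k(2) = 2k² + (k choose 2)² = k²(k²-2k+9)/4`. -/
theorem cphi_value_at_two (k : ℕ) (hk : 0 < k) (c : ℕ → ℤ) (hc : IsCphi k c) :
    c 2 = 2 * (k : ℤ) ^ 2 + ((k.choose 2 : ℤ)) ^ 2 ∧
      4 * c 2 = (k : ℤ) ^ 2 * ((k : ℤ) ^ 2 - 2 * k + 9) := by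
  -- coefficient values of the factors
  have hF1_0 : PowerSeries.coeff 0 ((1 - (X : PowerSeries ℤ) ^ 1) ^ k) = 1 :=
    coeff_zero_one_sub_pow 1 k one_pos
  have hF2_0 : PowerSeries.coeff 0 ((1 - (X : PowerSeries ℤ) ^ 2) ^ k) = 1 :=
    coeff_zero_one_sub_pow 2 k two_pos
  have hF3_0 : PowerSeries.coeff 0 ((1 - (X : PowerSeries ℤ) ^ 3) ^ k) = 1 :=
    coeff_zero_one_sub_pow 3 k three_pos
  -- the three coefficient equations
  have h0 := hc 0
  have h1 := hc 1
  have h2 := hc 2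
  rw [Finset.prod_range_one] at h0
  rw [Finset.prod_range_succ, Finset.prod_range_one] at h1
  rw [Finset.prod_range_succ, Finset.prod_range_succ, Finset.prod_range_one] at h2
  simp only [Nat.reduceAdd] at h0 h1 h2
  rw [coeff_zero_mk_mul, hF1_0, thetaValue k 0 hk (by norm_num)] at h0
  have hP2_0 : PowerSeries.coeff 0 ((1 - (X:PowerSeries ℤ)^1)^k * (1 - X^2)^k) = 1 := by
    rw [coeff_zero_mul', hF1_0, hF2_0]; ring
  have hP2_1 : PowerSeries.coeff 1 ((1 - (X:PowerSeries ℤ)^1)^k * (1 - X^2)^k) = -(k:ℤ) := by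
    rw [coeff_one_mul', hF1_0, hF2_0, coeff_one_one_sub_pow_one k hk,
      coeff_one_one_sub_pow_two]; ring
  have hP2_2 : PowerSeries.coeff 2 ((1 - (X:PowerSeries ℤ)^1)^k * (1 - X^2)^k)
      = (k.choose 2 : ℤ) - k := by
    rw [coeff_two_mul', hF1_0, hF2_0, coeff_one_one_sub_pow_one k hk,
      coeff_one_one_sub_pow_two, coeff_two_one_sub_pow_one, coeff_two_one_sub_pow_two k hk]
    ring
  have hP3_0 : PowerSeries.coeff 0 ((1 - (X:PowerSeries ℤ)^1)^k * (1 - X^2)^k * (1 - X^3)^k)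
      = 1 := by
    rw [coeff_zero_mul', hP2_0, hF3_0]; ring
  have hP3_1 : PowerSeries.coeff 1 ((1 - (X:PowerSeries ℤ)^1)^k * (1 - X^2)^k * (1 - X^3)^k)
      = -(k:ℤ) := by
    rw [coeff_one_mul', hP2_0, hP2_1, hF3_0, coeff_one_one_sub_pow_three]; ring
  have hP3_2 : PowerSeries.coeff 2 ((1 - (X:PowerSeries ℤ)^1)^k * (1 - X^2)^k * (1 - X^3)^k)
      = (k.choose 2 : ℤ) - k := by
    rw [coeff_two_mul', hP2_0, hP2_1, hP2_2, hF3_0, coeff_one_one_sub_pow_three,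
      coeff_two_one_sub_pow_three]; ring
  rw [coeff_one_mk_mul, hP2_0, hP2_1, thetaValue k 1 hk (by norm_num)] at h1
  rw [coeff_two_mk_mul, hP3_0, hP3_1, hP3_2, thetaValue k 2 hk (by norm_num)] at h2
  have hT1 : ((k.choose 1 * (k - 1).choose 1 : ℕ) : ℤ) = k * ((k : ℤ) - 1) := by
    rw [Nat.choose_one_right, Nat.choose_one_right]
    push_cast [Nat.cast_sub hk]
    ring
  have hT2 : 4 * ((k.choose 2 * (k - 2).choose 2 : ℕ) : ℤ)
      = (k:ℤ)^4 - 6*(k:ℤ)^3 + 11*(k:ℤ)^2 - 6*k := by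
    by_cases h4 : 4 ≤ k
    · have e1 := two_choose_two k
      have e2 := two_choose_two (k - 2)
      have hcast : ((k - 2 : ℕ) : ℤ) = (k : ℤ) - 2 := by
        push_cast [Nat.cast_sub (by omega : 2 ≤ k)]; ring
      rw [hcast] at e2
      push_cast
      linear_combination (2 * ((k-2).choose 2 : ℤ)) * e1 + ((k:ℤ)^2 - k) * e2
    · interval_cases k <;> decide
  rw [hT1] at h1
  have hc2c : 2 * (k.choose 2 : ℤ) = (k:ℤ)^2 - k := two_choose_two k
  simp only [Nat.choose_zero_right, Nat.sub_zero, Nat.mul_one, Nat.cast_one, mul_one,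
    mul_zero, add_zero, zero_add, mul_comm] at h0 h1 h2
  -- derive the values
  have hc0 : c 0 = 1 := by linarith
  have hc1 : c 1 = (k:ℤ)^2 := by
    rw [hc0] at h1
    linarith
  have hmain : 4 * c 2 = (k:ℤ)^4 - 2*(k:ℤ)^3 + 9*(k:ℤ)^2 := by
    rw [hc0, hc1] at h2
    linarith [hT2, hc2c, h2]
  constructor
  · have hCC : 4 * ((k.choose 2 : ℤ))^2 = (k:ℤ)^4 - 2*(k:ℤ)^3 + (k:ℤ)^2 := by
      linear_combination (2 * (k.choose 2 : ℤ) + (k:ℤ)^2 - k) * hc2c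
    linarith [hmain, hCC]
  · linear_combination hmain
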